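/- Let ρ > 1, δ₃ > 0, 0 < h < e^{−1/ρ}, and define J₂'(n,z) = Γ(1+n/ρ)/(R_n^{n+1} z^{n+1}). Then there exists N such that for all n ≥ N and all z ∈ Ω₄ = {z = re^{iφ} : 0 < r ≤ e^{−1/ρ} − h, |φ| ≥ π/(2ρ) + δ₃}, one has |J₂'(n,z)| ≥ (1 + h e^{1/ρ}/2)^n. -/

import Mathlib

open Complex Real Filter Topology

/-- `R_n = Γ(1+n/ρ)/Γ(1+(n-1)/ρ)`. -/
noncomputable def Rn (ρ : ℝ) (n : ℕ) : ℝ :=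
  Real.Gamma (1 + (n : ℝ) / ρ) / Real.Gamma (1 + ((n : ℝ) - 1) / ρ)


/-- `J₂·(n,z) = Γ(1+n/ρ)/(R_n^{n+1} z^{n+1})`. -/
noncomputable def J2 (ρ : ℝ) (n : ℕ) (z : ℂ) : ℂ :=
  (Real.Gamma (1 + (n : ℝ) / ρ) : ℂ) / ((Rn ρ n : ℂ) ^ (n + 1) * z ^ (n + 1))


lemma Rn_log_lower (ρ : ℝ) (hρ : 1 < ρ) (n : ℕ) (hn : 1 ≤ n) :
    (1/ρ) * Real.log ((n : ℝ)/ρ) ≤ Real.log (Rn ρ n) := by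
  have hρ0 : (0:ℝ) < ρ := by linarith
  set s : ℝ := 1/ρ with hs
  have hs0 : 0 < s := by positivity
  have hs1 : s < 1 := (div_lt_one hρ0).2 hρ
  have hn1 : (1:ℝ) ≤ (n:ℝ) := by exact_mod_cast hn
  have hx : (0:ℝ) < (n:ℝ)/ρ := by positivity
  have hy : (0:ℝ) < 1 + (n:ℝ)/ρ := by positivity
  have hconv := Real.convexOn_log_Gamma.2 (Set.mem_Ioi.2 hx) (Set.mem_Ioi.2 hy)
    hs0.le (by linarith : (0:ℝ) ≤ 1 - s) (by ring)
  simp only [smul_eq_mul, Function.comp_apply] at hconv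
  have hcomb : s * ((n:ℝ)/ρ) + (1-s) * (1 + (n:ℝ)/ρ) = 1 + ((n:ℝ)-1)/ρ := by
    rw [hs]; ring
  rw [hcomb] at hconv
  have hG : Real.Gamma (1 + (n:ℝ)/ρ) = ((n:ℝ)/ρ) * Real.Gamma ((n:ℝ)/ρ) := by
    rw [add_comm]; exact Real.Gamma_add_one hx.ne'
  have hGpos : 0 < Real.Gamma ((n:ℝ)/ρ) := Real.Gamma_pos_of_pos hx
  have hGpos' : 0 < Real.Gamma (1 + (n:ℝ)/ρ) := Real.Gamma_pos_of_pos hy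
  have hGa : 0 < Real.Gamma (1 + ((n:ℝ)-1)/ρ) := by
    apply Real.Gamma_pos_of_pos
    have : (0:ℝ) ≤ ((n:ℝ)-1)/ρ := div_nonneg (by linarith) hρ0.le
    linarith
  have hlogG : Real.log (Real.Gamma ((n:ℝ)/ρ))
      = Real.log (Real.Gamma (1 + (n:ℝ)/ρ)) - Real.log ((n:ℝ)/ρ) := by
    rw [hG, Real.log_mul hx.ne' hGpos.ne']; ring
  rw [Rn, Real.log_div hGpos'.ne' hGa.ne']
  rw [hlogG] at hconv
  nlinarith [hconv]

lemma Rn_log_upper (ρ : ℝ) (hρ : 1 < ρ) (n : ℕ) (hn : 1 ≤ n) :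
    Real.log (Rn ρ n) ≤ (1/ρ) * Real.log (1 + ((n:ℝ)-1)/ρ) := by
  have hρ0 : (0:ℝ) < ρ := by linarith
  set s : ℝ := 1/ρ with hs
  have hs0 : 0 < s := by positivity
  have hs1 : s < 1 := (div_lt_one hρ0).2 hρ
  have hn1 : (1:ℝ) ≤ (n:ℝ) := by exact_mod_cast hn
  set a : ℝ := 1 + ((n:ℝ)-1)/ρ with ha
  have ha1 : (1:ℝ) ≤ a := by
    have h0 : (0:ℝ) ≤ ((n:ℝ)-1)/ρ := div_nonneg (by linarith) hρ0.le
    rw [ha]; linarith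
  have ha0 : (0:ℝ) < a := by linarith
  have hconv := Real.convexOn_log_Gamma.2 (Set.mem_Ioi.2 ha0)
    (Set.mem_Ioi.2 (by linarith : (0:ℝ) < a + 1))
    (by linarith : (0:ℝ) ≤ 1 - s) hs0.le (by ring)
  simp only [smul_eq_mul, Function.comp_apply] at hconv
  have hcomb : (1-s) * a + s * (a + 1) = 1 + (n:ℝ)/ρ := by
    rw [ha, hs]; ring
  rw [hcomb] at hconv
  have hG : Real.Gamma (a + 1) = a * Real.Gamma a := Real.Gamma_add_one ha0.ne'
  have hGa : 0 < Real.Gamma a := Real.Gamma_pos_of_pos ha0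
  have hGpos' : 0 < Real.Gamma (1 + (n:ℝ)/ρ) := by
    apply Real.Gamma_pos_of_pos; positivity
  have hlogG : Real.log (Real.Gamma (a+1)) = Real.log a + Real.log (Real.Gamma a) := by
    rw [hG, Real.log_mul ha0.ne' hGa.ne']
  rw [hlogG] at hconv
  rw [Rn, Real.log_div hGpos'.ne' (by rw [← ha]; exact hGa.ne')]
  nlinarith [hconv]

lemma Gamma_prod (ρ : ℝ) (hρ : 1 < ρ) (n : ℕ) :
    Real.Gamma (1 + (n:ℝ)/ρ) = ∏ k ∈ Finset.range n, Rn ρ (k+1) := by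
  have hρ0 : (0:ℝ) < ρ := by linarith
  induction n with
  | zero => simp [Real.Gamma_one]
  | succ m ih =>
    rw [Finset.prod_range_succ, ← ih, Rn]
    have hpos : 0 < Real.Gamma (1 + (m:ℝ)/ρ) := by
      apply Real.Gamma_pos_of_pos; positivity
    push_cast
    rw [show ((m:ℝ) + 1 - 1) = (m:ℝ) by ring]
    field_simp

lemma pow_le_fact_mul_exp (n : ℕ) : (n:ℝ)^n ≤ (n.factorial : ℝ) * Real.exp n := by
  have h := Real.sum_le_exp_of_nonneg (x := (n:ℝ)) n.cast_nonneg (n+1)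
  have h2 : (n:ℝ)^n / (n.factorial : ℝ) ≤ ∑ i ∈ Finset.range (n+1), (n:ℝ)^i / (i.factorial : ℝ) :=
    Finset.single_le_sum (f := fun i => (n:ℝ)^i / (i.factorial : ℝ))
      (fun i _ => by positivity) (Finset.self_mem_range_succ n)
  have h3 := le_trans h2 h
  rw [div_le_iff₀ (by positivity : (0:ℝ) < (n.factorial : ℝ))] at h3
  linarith

lemma Rn_pos (ρ : ℝ) (hρ : 1 < ρ) (n : ℕ) (hn : 1 ≤ n) : 0 < Rn ρ n := by
  have hρ0 : (0:ℝ) < ρ := by linarith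
  have hn1 : (1:ℝ) ≤ (n:ℝ) := by exact_mod_cast hn
  have h1 : 0 < Real.Gamma (1 + (n:ℝ)/ρ) := Real.Gamma_pos_of_pos (by positivity)
  have h2 : 0 < Real.Gamma (1 + ((n:ℝ)-1)/ρ) := by
    apply Real.Gamma_pos_of_pos
    have : (0:ℝ) ≤ ((n:ℝ)-1)/ρ := div_nonneg (by linarith) hρ0.le
    linarith
  exact div_pos h1 h2

lemma Rn_lower_rpow (ρ : ℝ) (hρ : 1 < ρ) (n : ℕ) (hn : 1 ≤ n) :
    ((n : ℝ)/ρ) ^ (1/ρ : ℝ) ≤ Rn ρ n := by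
  have hρ0 : (0:ℝ) < ρ := by linarith
  have hn1 : (1:ℝ) ≤ (n:ℝ) := by exact_mod_cast hn
  have hx : (0:ℝ) < (n:ℝ)/ρ := by positivity
  rw [Real.rpow_def_of_pos hx, ← Real.exp_log (Rn_pos ρ hρ n hn)]
  exact Real.exp_le_exp.2 (by rw [mul_comm]; exact Rn_log_lower ρ hρ n hn)

lemma Rn_upper_rpow (ρ : ℝ) (hρ : 1 < ρ) (n : ℕ) (hn : 1 ≤ n) :
    Rn ρ n ≤ (1 + ((n:ℝ)-1)/ρ) ^ (1/ρ : ℝ) := by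
  have hρ0 : (0:ℝ) < ρ := by linarith
  have hn1 : (1:ℝ) ≤ (n:ℝ) := by exact_mod_cast hn
  have ha0 : (0:ℝ) < 1 + ((n:ℝ)-1)/ρ := by
    have : (0:ℝ) ≤ ((n:ℝ)-1)/ρ := div_nonneg (by linarith) hρ0.le
    linarith
  rw [Real.rpow_def_of_pos ha0, ← Real.exp_log (Rn_pos ρ hρ n hn)]
  exact Real.exp_le_exp.2 (by rw [mul_comm]; exact Rn_log_upper ρ hρ n hn)

lemma Gamma_lower (ρ : ℝ) (hρ : 1 < ρ) (n : ℕ) :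
    ((n.factorial : ℝ)/ρ^n) ^ (1/ρ : ℝ) ≤ Real.Gamma (1 + (n:ℝ)/ρ) := by
  have hρ0 : (0:ℝ) < ρ := by linarith
  rw [Gamma_prod ρ hρ n]
  have heq : ((n.factorial : ℝ)/ρ^n) ^ (1/ρ : ℝ)
      = ∏ k ∈ Finset.range n, ((((k:ℕ)+1 : ℕ) : ℝ)/ρ) ^ (1/ρ : ℝ) := by
    rw [Real.finset_prod_rpow _ _ (fun k _ => by positivity) _]
    congr 1
    rw [Finset.prod_div_distrib, Finset.prod_const, Finset.card_range]
    congr 1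
    rw [← Finset.prod_range_add_one_eq_factorial]
    push_cast
    ring
  rw [heq]
  exact Finset.prod_le_prod (fun k _ => by positivity)
    (fun k _ => Rn_lower_rpow ρ hρ (k+1) (Nat.le_add_left 1 k))

set_option maxHeartbeats 1000000 in
theorem stmt15 (ρ : ℝ) (hρ : 1 < ρ) (δ₃ h : ℝ) (hδ₃ : 0 < δ₃) (hh : 0 < h)
    (hh' : h < Real.exp (-(1 / ρ))) :
    ∃ N : ℕ, ∀ n ≥ N, ∀ z : ℂ,
      0 < ‖z‖ → ‖z‖ ≤ Real.exp (-(1 / ρ)) - h →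
      π / (2 * ρ) + δ₃ ≤ |z.arg| →
      (1 + h * Real.exp (1 / ρ) / 2) ^ n ≤ ‖J2 ρ n z‖ := by
  have hρ0 : (0:ℝ) < ρ := by linarith
  obtain ⟨s, hs⟩ : ∃ s : ℝ, s = 1/ρ := ⟨_, rfl⟩
  have hs0 : 0 < s := by rw [hs]; positivity
  obtain ⟨c, hc⟩ : ∃ c : ℝ, c = Real.exp (-(1 / ρ)) - h := ⟨_, rfl⟩
  have hc0 : 0 < c := by rw [hc]; linarith
  obtain ⟨α, hα⟩ : ∃ α : ℝ, α = 1 + h * Real.exp (1 / ρ) / 2 := ⟨_, rfl⟩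
  rw [← hc, ← hα]
  have hα1 : 1 < α := by
    have := mul_pos hh (Real.exp_pos (1/ρ)); rw [hα]; linarith
  have hα0 : 0 < α := by linarith
  have hεlog : Real.log c + Real.log α < -s := by
    have hE : (0:ℝ) < Real.exp (1/ρ) := Real.exp_pos _
    have hmul : Real.exp (-(1/ρ)) * Real.exp (1/ρ) = 1 := by
      rw [← Real.exp_add]; simp
    have hmul' : h * (Real.exp (-(1/ρ)) * Real.exp (1/ρ)) = h := by rw [hmul]; ring
    have hsq : (0:ℝ) < h * h * Real.exp (1/ρ) := by positivity
    have hcα : c * α < Real.exp (-s) := by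
      rw [hc, hα, hs]
      nlinarith [hh, hE, hmul', hsq]
    calc Real.log c + Real.log α = Real.log (c * α) := (Real.log_mul hc0.ne' hα0.ne').symm
      _ < Real.log (Real.exp (-s)) := Real.log_lt_log (by positivity) hcα
      _ = -s := Real.log_exp _
  obtain ⟨ε, hε⟩ : ∃ ε : ℝ, ε = -s - Real.log c - Real.log α := ⟨_, rfl⟩
  have hε0 : 0 < ε := by rw [hε]; linarith
  obtain ⟨K, hK⟩ : ∃ K : ℝ,
      K = s*(ρ-1) + 2*s*Real.sqrt ρ + |Real.log c| + s*|Real.log ρ| + 1 := ⟨_, rfl⟩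
  have hK1 : 1 ≤ K := by
    rw [hK]
    have h1 : (0:ℝ) ≤ s*(ρ-1) := mul_nonneg hs0.le (by linarith)
    have h2 : (0:ℝ) ≤ 2*s*Real.sqrt ρ :=
      mul_nonneg (mul_nonneg (by norm_num) hs0.le) (Real.sqrt_nonneg _)
    have h3 : (0:ℝ) ≤ |Real.log c| := abs_nonneg _
    have h4 : (0:ℝ) ≤ s*|Real.log ρ| := mul_nonneg hs0.le (abs_nonneg _)
    linarith
  refine ⟨max 1 ⌈((K + 2*s)/ε)^2⌉₊, ?_⟩
  intro n hn z hz0 hz1 _harg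
  have hn1 : 1 ≤ n := le_trans (le_max_left _ _) hn
  obtain ⟨A, hA⟩ : ∃ A : ℝ, A = (n:ℝ) := ⟨_, rfl⟩
  have hA1 : (1:ℝ) ≤ A := by rw [hA]; exact_mod_cast hn1
  have hA0 : (0:ℝ) < A := by linarith
  have hceil : ((K + 2*s)/ε)^2 ≤ A := by
    calc ((K + 2*s)/ε)^2 ≤ (⌈((K + 2*s)/ε)^2⌉₊ : ℝ) := Nat.le_ceil _
      _ ≤ ((max 1 ⌈((K + 2*s)/ε)^2⌉₊ : ℕ) : ℝ) := by
          exact_mod_cast Nat.le_max_right _ _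
      _ ≤ A := by rw [hA]; exact_mod_cast hn
  have hKs0 : 0 ≤ (K + 2*s)/ε := div_nonneg (by linarith) hε0.le
  have hsqrtA : (K + 2*s)/ε ≤ Real.sqrt A := by
    rw [show (K + 2*s)/ε = Real.sqrt (((K + 2*s)/ε)^2) from (Real.sqrt_sq hKs0).symm]
    exact Real.sqrt_le_sqrt hceil
  have hsA1 : 1 ≤ Real.sqrt A := by
    rw [show (1:ℝ) = Real.sqrt 1 by simp]
    exact Real.sqrt_le_sqrt hA1
  have hsq : Real.sqrt A * Real.sqrt A = A := Real.mul_self_sqrt hA0.le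
  have hkey : K + 2*s*Real.sqrt A ≤ A * ε := by
    have h1 : K + 2*s ≤ Real.sqrt A * ε := by
      rw [div_le_iff₀ hε0] at hsqrtA; linarith
    have h2 : Real.sqrt A * (K + 2*s) ≤ Real.sqrt A * (Real.sqrt A * ε) :=
      mul_le_mul_of_nonneg_left h1 (Real.sqrt_nonneg A)
    have h3 : Real.sqrt A * (Real.sqrt A * ε) = A * ε := by rw [← mul_assoc, hsq]
    have h4 : K * 1 ≤ K * Real.sqrt A := mul_le_mul_of_nonneg_left hsA1 (by linarith)
    have h5 : 1 * (2*s) ≤ Real.sqrt A * (2*s) :=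
      mul_le_mul_of_nonneg_right hsA1 (by linarith)
    linarith only [h2, h3, h4, h5]
  -- analytic setup
  obtain ⟨a, ha⟩ : ∃ a : ℝ, a = 1 + (A - 1)/ρ := ⟨_, rfl⟩
  have ha1 : (1:ℝ) ≤ a := by
    have h0 : (0:ℝ) ≤ (A-1)/ρ := div_nonneg (by linarith) hρ0.le
    rw [ha]; linarith
  have ha0 : (0:ℝ) < a := by linarith
  have hRn0 : 0 < Rn ρ n := Rn_pos ρ hρ n hn1
  have hRu : Rn ρ n ≤ a ^ s := by
    rw [ha, hA, hs]
    exact Rn_upper_rpow ρ hρ n hn1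
  obtain ⟨r, hr⟩ : ∃ r : ℝ, r = ‖z‖ := ⟨_, rfl⟩
  have hr0 : 0 < r := by rw [hr]; exact hz0
  have hrc : r ≤ c := by rw [hr]; exact hz1
  have hΓpos : 0 < Real.Gamma (1 + A/ρ) := by
    apply Real.Gamma_pos_of_pos
    have : 0 < A/ρ := div_pos hA0 hρ0
    linarith
  have hJ : ‖J2 ρ n z‖
      = Real.Gamma (1 + A/ρ) / ((Rn ρ n)^(n+1) * r^(n+1)) := by
    rw [hr, hA, J2, norm_div, norm_mul, norm_pow, norm_pow, Complex.norm_real,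
      Complex.norm_real, Real.norm_eq_abs, Real.norm_eq_abs, abs_of_pos hRn0, abs_of_pos (by rw [← hA]; exact hΓpos)]
  rw [hJ]
  have hden_pos : 0 < (Rn ρ n)^(n+1) * r^(n+1) :=
    mul_pos (pow_pos hRn0 _) (pow_pos hr0 _)
  have has0 : (0:ℝ) < a ^ s := Real.rpow_pos_of_pos ha0 _
  have hDb : (Rn ρ n)^(n+1) * r^(n+1) ≤ (a^s)^(n+1) * c^(n+1) := by
    have h1 : (Rn ρ n)^(n+1) ≤ (a^s)^(n+1) := pow_le_pow_left₀ hRn0.le hRu _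
    have h2 : r^(n+1) ≤ c^(n+1) := pow_le_pow_left₀ hr0.le hrc _
    exact mul_le_mul h1 h2 (pow_pos hr0 _).le (pow_pos has0 _).le
  have hQ0 : (0:ℝ) < ((n.factorial:ℝ)/ρ^n) ^ (1/ρ:ℝ) :=
    Real.rpow_pos_of_pos (by positivity) _
  -- the core inequality
  have hcore : α ^ n * ((a^s)^(n+1) * c^(n+1)) ≤ ((n.factorial:ℝ)/ρ^n) ^ (1/ρ:ℝ) := by
    have hP0 : 0 < α ^ n * ((a^s)^(n+1) * c^(n+1)) :=
      mul_pos (pow_pos hα0 _) (mul_pos (pow_pos has0 _) (pow_pos hc0 _))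
    rw [← Real.log_le_log_iff hP0 hQ0]
    rw [Real.log_mul (pow_pos hα0 _).ne' (mul_pos (pow_pos has0 _) (pow_pos hc0 _)).ne',
      Real.log_mul (pow_pos has0 _).ne' (pow_pos hc0 _).ne',
      Real.log_pow, Real.log_pow, Real.log_pow, Real.log_rpow ha0,
      Real.log_rpow (by positivity)]
    obtain ⟨L, hLdef⟩ : ∃ L : ℝ, L = Real.log (A + ρ - 1) := ⟨_, rfl⟩
    have hAρ : (0:ℝ) < A + ρ - 1 := by linarith
    have hloga : Real.log a = L - Real.log ρ := by
      have hd : (A + ρ - 1)/ρ = a := by rw [ha]; field_simp; ring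
      rw [← hd, Real.log_div hAρ.ne' hρ0.ne', hLdef]
    have hlogQ : Real.log ((n.factorial:ℝ)/ρ^n)
        = Real.log (n.factorial:ℝ) - A * Real.log ρ := by
      rw [Real.log_div (by positivity) (by positivity), Real.log_pow, hA]
    have hF1 : A * Real.log A ≤ Real.log (n.factorial:ℝ) + A := by
      have h0 : A^n ≤ (n.factorial:ℝ) * Real.exp A := by
        rw [hA]; exact_mod_cast pow_le_fact_mul_exp n
      have h1 : Real.log (A^n) ≤ Real.log ((n.factorial:ℝ) * Real.exp A) :=
        (Real.log_le_log_iff (pow_pos hA0 _) (by positivity)).2 h0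
      rw [Real.log_pow, Real.log_mul (by positivity) (Real.exp_pos _).ne',
        Real.log_exp, ← hA] at h1
      linarith
    have hF3 : A * L ≤ A * Real.log A + (ρ - 1) := by
      have h1 : Real.log ((A + ρ - 1)/A) ≤ (A + ρ - 1)/A - 1 :=
        Real.log_le_sub_one_of_pos (div_pos hAρ hA0)
      rw [Real.log_div hAρ.ne' hA0.ne', ← hLdef] at h1
      have h2 : A * (L - Real.log A) ≤ A * ((A + ρ - 1)/A - 1) :=
        mul_le_mul_of_nonneg_left h1 hA0.le
      have h3 : A * ((A + ρ - 1)/A - 1) = ρ - 1 := by field_simp; ring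
      linarith
    have hsqρ : Real.sqrt (A + ρ - 1) ≤ Real.sqrt A + Real.sqrt ρ := by
      have h1 : A + ρ - 1 ≤ (Real.sqrt A + Real.sqrt ρ)^2 := by
        have e1 : (Real.sqrt A + Real.sqrt ρ)^2
            = A + 2*(Real.sqrt A * Real.sqrt ρ) + ρ := by
          rw [add_sq, Real.sq_sqrt hA0.le, Real.sq_sqrt hρ0.le]; ring
        have e2 : 0 ≤ Real.sqrt A * Real.sqrt ρ :=
          mul_nonneg (Real.sqrt_nonneg _) (Real.sqrt_nonneg _)
        rw [e1]
        linarith only [e2]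
      calc Real.sqrt (A + ρ - 1) ≤ Real.sqrt ((Real.sqrt A + Real.sqrt ρ)^2) :=
            Real.sqrt_le_sqrt h1
        _ = Real.sqrt A + Real.sqrt ρ := Real.sqrt_sq
            (by linarith [Real.sqrt_nonneg A, Real.sqrt_nonneg ρ])
    have hF4 : L ≤ 2*(Real.sqrt A + Real.sqrt ρ) := by
      have h1 : Real.log (Real.sqrt (A + ρ - 1)) ≤ Real.sqrt (A + ρ - 1) - 1 :=
        Real.log_le_sub_one_of_pos (Real.sqrt_pos.2 hAρ)
      rw [Real.log_sqrt hAρ.le, ← hLdef] at h1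
      linarith [hsqρ]
    rw [hlogQ, hloga]
    push_cast
    rw [← hA, ← hs]
    have hm1 : s * (A * L) ≤ s * (A * Real.log A + (ρ-1)) :=
      mul_le_mul_of_nonneg_left hF3 hs0.le
    have hm2 : s * (A * Real.log A) ≤ s * (Real.log (n.factorial:ℝ) + A) :=
      mul_le_mul_of_nonneg_left hF1 hs0.le
    have hm3 : s * L ≤ s * (2*(Real.sqrt A + Real.sqrt ρ)) :=
      mul_le_mul_of_nonneg_left hF4 hs0.le
    have hm5 : A * ε = A * (-s) - A * Real.log c - A * Real.log α := by rw [hε]; ring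
    have hm6 : Real.log c ≤ |Real.log c| := le_abs_self _
    have hm7 : -(s * |Real.log ρ|) ≤ s * Real.log ρ := by
      have h1 : s * -|Real.log ρ| ≤ s * Real.log ρ :=
        mul_le_mul_of_nonneg_left (neg_abs_le _) hs0.le
      linarith
    have hm8 : K = s*(ρ-1) + 2*s*Real.sqrt ρ + |Real.log c| + s*|Real.log ρ| + 1 := hK
    linarith only [hkey, hm1, hm2, hm3, hm5, hm6, hm7, hm8]
  rw [le_div_iff₀ hden_pos]
  calc α ^ n * ((Rn ρ n)^(n+1) * r^(n+1)) ≤ α ^ n * ((a^s)^(n+1) * c^(n+1)) :=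
        mul_le_mul_of_nonneg_left hDb (pow_pos hα0 _).le
    _ ≤ ((n.factorial:ℝ)/ρ^n) ^ (1/ρ:ℝ) := hcore
    _ ≤ Real.Gamma (1 + A/ρ) := by rw [hA]; exact Gamma_lower ρ hρ n
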